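/- Let w be a weight, p > 0, and suppose the SC_p condition holds with exponent r > 1. Let f be locally integrable, let 𝒮 be an η-sparse family in a dyadic lattice, and define F_k = {Q ∈ 𝒮 : 4^{-k-1} < |f|_Q ≤ 4^{-k}} for k ∈ ℕ, with maximal cubes {Q_j^k} of F_k. Then the weak-type sparse bound holds: ‖A_𝒮 f‖_{L^{p,∞}(w)} ≤ C ‖Mf‖_{L^p(w)}, where A_𝒮 f = Σ_{Q∈𝒮} (|f|_Q) χ_Q and |f|_Q = (1/|Q|)∫_Q |f|. -/

import Mathlib

open MeasureTheory Metric Set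
open scoped ENNReal

/-- The uncentered Hardy–Littlewood maximal operator over cubes (= closed balls in the
sup metric on `ℝⁿ = Fin n → ℝ`), acting on `ℝ≥0∞`-valued functions. -/
noncomputable def maximal {n : ℕ} (f : (Fin n → ℝ) → ℝ≥0∞) (x : Fin n → ℝ) : ℝ≥0∞ :=
  ⨆ (c : Fin n → ℝ) (r : ℝ) (_ : 0 < r) (_ : x ∈ closedBall c r),
    (volume (closedBall c r))⁻¹ * ∫⁻ y in closedBall c r, f y

/-- `Mχ_E`, the maximal function of the indicator of a set `E`. -/
noncomputable def maximalInd {n : ℕ} (E : Set (Fin n → ℝ)) (x : Fin n → ℝ) : ℝ≥0∞ :=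
  maximal (E.indicator 1) x

/-- The `SC_p` condition with exponent `r` and constant `C₀`: for every (countable)
family of pairwise disjoint cubes `{Q_j}`,
`Σ_j ((1/|Q_j|)∫_{Q_j} w^r)^{1/r} |Q_j| ≤ C₀ ∫ (Mχ_{∪_j Q_j})^p w`. -/
def SCp {n : ℕ} (w : (Fin n → ℝ) → ℝ≥0∞) (p r : ℝ) (C₀ : ℝ≥0∞) : Prop :=
  ∀ (J : Set ℕ) (c : ℕ → Fin n → ℝ) (ρ : ℕ → ℝ),
    (∀ j ∈ J, 0 < ρ j) →
    (J.PairwiseDisjoint fun j => closedBall (c j) (ρ j)) →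
    ∑' j : J, ((volume (closedBall (c j) (ρ j)))⁻¹ *
        ∫⁻ y in closedBall (c j) (ρ j), (w y) ^ r) ^ (1/r) *
          volume (closedBall (c j) (ρ j)) ≤
      C₀ * ∫⁻ x, (maximalInd (⋃ j ∈ J, closedBall (c j) (ρ j)) x) ^ p * w x

/-- The sparse operator `A_𝒮 f = Σ_{Q∈𝒮} (1/|Q|)(∫_Q |f|) χ_Q` for a family of
cubes `{Q_j}_{j∈J}`. -/
noncomputable def sparseOp {n : ℕ} (J : Set ℕ) (Q : ℕ → Set (Fin n → ℝ))
    (f : (Fin n → ℝ) → ℝ) (x : Fin n → ℝ) : ℝ≥0∞ :=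
  ∑' j : J, ((volume (Q j))⁻¹ * ∫⁻ y in Q j, (‖f y‖₊ : ℝ≥0∞)) * (Q j).indicator 1 x

open scoped Classical

section AuxSparse


open scoped Classical

variable {α : Type*} {J : Set ℕ} {Q : ℕ → Set α}

/-- rank of a cube within a finite family: number of cubes of the family containing it. -/
noncomputable def rnk (Q : ℕ → Set α) (G : Finset ℕ) (j : ℕ) : ℕ :=
  (G.filter fun i => Q j ⊆ Q i).card

/-- union of cubes of rank at least `m`. -/
noncomputable def Egen (Q : ℕ → Set α) (G : Finset ℕ) (m : ℕ) : Set α :=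
  ⋃ j ∈ G.filter fun j => m ≤ rnk Q G j, Q j

variable {G : Finset ℕ}

lemma rnk_pos {j : ℕ} (hj : j ∈ G) : 1 ≤ rnk Q G j :=
  Finset.card_pos.2 ⟨j, Finset.mem_filter.2 ⟨hj, subset_rfl⟩⟩

lemma rnk_le_of_subset {i j : ℕ} (h : Q j ⊆ Q i) : rnk Q G i ≤ rnk Q G j :=
  Finset.card_le_card <| Finset.monotone_filter_right G fun t _ ht => h.trans ht

lemma rnk_lt_of_ssubset {i j : ℕ} (hi : i ∈ G) (hij : Q i ⊂ Q j) :
    rnk Q G j < rnk Q G i := by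
  apply Finset.card_lt_card
  constructor
  · exact Finset.monotone_filter_right G fun t _ ht => hij.subset.trans ht
  · intro hsub
    have hiin : i ∈ G.filter fun t => Q i ⊆ Q t := Finset.mem_filter.2 ⟨hi, subset_rfl⟩
    have := Finset.mem_filter.1 (hsub hiin)
    exact hij.not_subset this.2

lemma nested_of_not_disjoint
    (hnest : ∀ i ∈ J, ∀ j ∈ J, Q i ⊆ Q j ∨ Q j ⊆ Q i ∨ Disjoint (Q i) (Q j))
    (hG : ↑G ⊆ J) {i j : ℕ} (hi : i ∈ G) (hj : j ∈ G)
    (hd : ¬ Disjoint (Q i) (Q j)) : Q i ⊆ Q j ∨ Q j ⊆ Q i := by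
  rcases hnest i (hG hi) j (hG hj) with h | h | h
  · exact Or.inl h
  · exact Or.inr h
  · exact absurd h hd

lemma rnk_eq_disjoint (hinj : J.InjOn Q)
    (hnest : ∀ i ∈ J, ∀ j ∈ J, Q i ⊆ Q j ∨ Q j ⊆ Q i ∨ Disjoint (Q i) (Q j))
    (hG : ↑G ⊆ J) {i j : ℕ} (hi : i ∈ G) (hj : j ∈ G) (hij : i ≠ j)
    (hrk : rnk Q G i = rnk Q G j) : Disjoint (Q i) (Q j) := by
  by_contra hd
  have hQij : Q i ≠ Q j := fun h => hij (hinj (hG hi) (hG hj) h)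
  rcases nested_of_not_disjoint hnest hG hi hj hd with h | h
  · exact absurd hrk (rnk_lt_of_ssubset hi ⟨h, fun h' => hQij (subset_antisymm h h')⟩).ne'
  · exact absurd hrk (rnk_lt_of_ssubset hj ⟨h, fun h' => hQij (subset_antisymm h' h)⟩).ne

lemma subset_rank_one (hinj : J.InjOn Q)
    (hnest : ∀ i ∈ J, ∀ j ∈ J, Q i ⊆ Q j ∨ Q j ⊆ Q i ∨ Disjoint (Q i) (Q j))
    (hG : ↑G ⊆ J) {t T : ℕ} (ht : t ∈ G) (hT : T ∈ G) (h1 : rnk Q G T = 1)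
    (hd : ¬ Disjoint (Q t) (Q T)) : Q t ⊆ Q T := by
  rcases nested_of_not_disjoint hnest hG ht hT hd with h | h
  · exact h
  · by_cases hQ : Q T = Q t
    · exact hQ.ge
    · have := rnk_lt_of_ssubset hT ⟨h, fun h' => hQ (subset_antisymm h h')⟩
      rw [h1] at this
      have h2 := rnk_pos (Q := Q) ht
      omega

lemma rnk_exists_between (hinj : J.InjOn Q)
    (hnest : ∀ i ∈ J, ∀ j ∈ J, Q i ⊆ Q j ∨ Q j ⊆ Q i ∨ Disjoint (Q i) (Q j))
    (hne : ∀ j ∈ J, (Q j).Nonempty)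
    (hG : ↑G ⊆ J) {j m : ℕ} (hj : j ∈ G) (hm1 : 1 ≤ m) (hm : m ≤ rnk Q G j) :
    ∃ t ∈ G, rnk Q G t = m ∧ Q j ⊆ Q t := by
  set C := G.filter fun i => Q j ⊆ Q i with hC
  have hjC : j ∈ C := Finset.mem_filter.2 ⟨hj, subset_rfl⟩
  have hCG : C ⊆ G := Finset.filter_subset _ _
  have hsubC : ∀ t ∈ C, (G.filter fun i => Q t ⊆ Q i) ⊆ C := by
    intro t ht i hi
    rcases Finset.mem_filter.1 hi with ⟨hiG, hti⟩
    exact Finset.mem_filter.2 ⟨hiG, ((Finset.mem_filter.1 ht).2).trans hti⟩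
  have hmaps : ∀ a ∈ C, rnk Q G a ∈ Finset.Icc 1 C.card := by
    intro a ha
    exact Finset.mem_Icc.2 ⟨rnk_pos (hCG ha), Finset.card_le_card (hsubC a ha)⟩
  have hinjC : ∀ a₁ a₂ : ℕ, a₁ ∈ C → a₂ ∈ C → rnk Q G a₁ = rnk Q G a₂ → a₁ = a₂ := by
    intro a b ha hb hab
    by_contra hne'
    have hd : ¬ Disjoint (Q a) (Q b) := by
      intro hdisj
      rcases hne j (hG hj) with ⟨x, hx⟩
      exact absurd rfl (hdisj.ne_of_mem ((Finset.mem_filter.1 ha).2 hx)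
        ((Finset.mem_filter.1 hb).2 hx))
    exact hne' (by
      by_contra hne''
      exact absurd (rnk_eq_disjoint hinj hnest hG (hCG ha) (hCG hb) hne'' hab) hd)
  have hcard : (Finset.Icc 1 C.card).card ≤ C.card := by
    rw [Nat.card_Icc]; omega
  have hsurj := Finset.surj_on_of_inj_on_of_card_le (fun a _ => rnk Q G a)
    hmaps hinjC hcard
  have hmIcc : m ∈ Finset.Icc 1 C.card := by
    refine Finset.mem_Icc.2 ⟨hm1, le_trans hm ?_⟩
    exact Finset.card_le_card (hsubC j hjC)
  rcases hsurj m hmIcc with ⟨t, htC, hrt⟩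
  exact ⟨t, hCG htC, hrt.symm, (Finset.mem_filter.1 htC).2⟩

lemma mem_Egen {x : α} {m : ℕ} :
    x ∈ Egen Q G m ↔ ∃ j ∈ G, m ≤ rnk Q G j ∧ x ∈ Q j := by
  simp only [Egen, Set.mem_iUnion, Finset.mem_filter, exists_prop]
  tauto

lemma card_le_rnk (hinj : J.InjOn Q)
    (hnest : ∀ i ∈ J, ∀ j ∈ J, Q i ⊆ Q j ∨ Q j ⊆ Q i ∨ Disjoint (Q i) (Q j))
    (hG : ↑G ⊆ J) {x : α} (hne' : (G.filter fun j => x ∈ Q j).Nonempty) :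
    ∃ s ∈ G.filter fun j => x ∈ Q j,
      (G.filter fun j => x ∈ Q j).card ≤ rnk Q G s := by
  set C := G.filter fun j => x ∈ Q j with hC
  obtain ⟨s, hsC, hmax⟩ := Finset.exists_max_image C (rnk Q C) hne'
  refine ⟨s, hsC, ?_⟩
  have hCsub : C ⊆ G.filter fun i => Q s ⊆ Q i := by
    intro b hbC
    have hd : ¬ Disjoint (Q s) (Q b) := fun hdisj =>
      absurd rfl (hdisj.ne_of_mem (Finset.mem_filter.1 hsC).2 (Finset.mem_filter.1 hbC).2)
    rcases nested_of_not_disjoint hnest hG (Finset.filter_subset _ _ hsC)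
      (Finset.filter_subset _ _ hbC) hd with h | h
    · exact Finset.mem_filter.2 ⟨Finset.filter_subset _ _ hbC, h⟩
    · -- Q b ⊆ Q s; then either equal or rnk within C contradiction
      by_cases hQ : Q b = Q s
      · exact Finset.mem_filter.2 ⟨Finset.filter_subset _ _ hbC, hQ.ge⟩
      · have hlt := rnk_lt_of_ssubset (Q := Q) (G := C) hbC ⟨h, fun h' => hQ (subset_antisymm h h')⟩
        exact absurd (hmax b hbC) (by omega)
  exact le_trans (Finset.card_le_card hCsub) le_rfl

end AuxSparse

section Decay

variable {X : Type*} [MeasurableSpace X] {J : Set ℕ} {Q : ℕ → Set X} {η : ℝ}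

lemma Egen_decay (μ : Measure X)
    (hinj : J.InjOn Q)
    (hnest : ∀ i ∈ J, ∀ j ∈ J, Q i ⊆ Q j ∨ Q j ⊆ Q i ∨ Disjoint (Q i) (Q j))
    (hne : ∀ j ∈ J, (Q j).Nonempty)
    (hQm : ∀ j ∈ J, MeasurableSet (Q j))
    (hsparse : ∀ j ∈ J, μ (⋃ i ∈ {i ∈ J | Q i ⊂ Q j}, Q i) ≤ ENNReal.ofReal (1 - η) * μ (Q j))
    {G : Finset ℕ} (hG : ↑G ⊆ J) {T : ℕ} (hT : T ∈ G) (h1 : rnk Q G T = 1) :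
    ∀ m : ℕ, μ (Egen Q G (m+1) ∩ Q T) ≤ (ENNReal.ofReal (1 - η))^m * μ (Q T) := by
  intro m
  induction m with
  | zero => simpa using measure_mono (Set.inter_subset_right : Egen Q G 1 ∩ Q T ⊆ Q T)
  | succ m ih =>
    set ε := ENNReal.ofReal (1 - η) with hε
    set R := G.filter (fun t => rnk Q G t = m+1 ∧ Q t ⊆ Q T) with hRdef
    have hRG : R ⊆ G := Finset.filter_subset _ _
    have hcover : Egen Q G (m+2) ∩ Q T ⊆ ⋃ t ∈ R, (Egen Q G (m+2) ∩ Q t) := by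
      rintro x ⟨hxE, hxT⟩
      obtain ⟨j, hjG, hrj, hxj⟩ := mem_Egen.1 hxE
      obtain ⟨t, htG, hrt, hjt⟩ := rnk_exists_between (m := m+1) hinj hnest hne hG hjG
        (by omega) (by omega)
      have hxt : x ∈ Q t := hjt hxj
      have htT : Q t ⊆ Q T := subset_rank_one hinj hnest hG htG hT h1
        (Set.not_disjoint_iff.2 ⟨x, hxt, hxT⟩)
      exact Set.mem_biUnion (Finset.mem_filter.2 ⟨htG, hrt, htT⟩) ⟨hxE, hxt⟩
    have hstep : ∀ t ∈ R, μ (Egen Q G (m+2) ∩ Q t) ≤ ε * μ (Q t) := by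
      intro t htR
      obtain ⟨htG, hrt, htT⟩ := Finset.mem_filter.1 htR
      have hsub : Egen Q G (m+2) ∩ Q t ⊆ ⋃ i ∈ {i ∈ J | Q i ⊂ Q t}, Q i := by
        rintro x ⟨hxE, hxt⟩
        obtain ⟨j, hjG, hrj, hxj⟩ := mem_Egen.1 hxE
        have hd : ¬ Disjoint (Q j) (Q t) := Set.not_disjoint_iff.2 ⟨x, hxj, hxt⟩
        rcases hnest j (hG hjG) t (hG htG) with h | h | h
        · have hQne : Q j ≠ Q t := by
            intro hEq
            have hjt : j = t := hinj (hG hjG) (hG htG) hEq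
            rw [hjt] at hrj
            omega
          exact Set.mem_biUnion (show j ∈ {i ∈ J | Q i ⊂ Q t} from ⟨hG hjG, h, fun h' => hQne (subset_antisymm h h')⟩) hxj
        · have h2 : rnk Q G j ≤ rnk Q G t := rnk_le_of_subset h
          omega
        · exact absurd h hd
      exact (measure_mono hsub).trans (hsparse t (hG htG))
    have hdisjR : (↑R : Set ℕ).PairwiseDisjoint Q := by
      intro i hi j hj hij
      exact rnk_eq_disjoint hinj hnest hG (hRG hi) (hRG hj) hij
        (by rw [(Finset.mem_filter.1 hi).2.1, (Finset.mem_filter.1 hj).2.1])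
    have hUsub : (⋃ t ∈ R, Q t) ⊆ Egen Q G (m+1) ∩ Q T := by
      intro x hx
      obtain ⟨t, htR, hxt⟩ := Set.mem_iUnion₂.1 hx
      obtain ⟨htG, hrt, htT⟩ := Finset.mem_filter.1 htR
      exact ⟨mem_Egen.2 ⟨t, htG, le_of_eq hrt.symm, hxt⟩, htT hxt⟩
    calc μ (Egen Q G (m+2) ∩ Q T)
        ≤ ∑ t ∈ R, μ (Egen Q G (m+2) ∩ Q t) :=
          (measure_mono hcover).trans (measure_biUnion_finset_le R _)
      _ ≤ ∑ t ∈ R, ε * μ (Q t) := Finset.sum_le_sum hstep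
      _ = ε * ∑ t ∈ R, μ (Q t) := (Finset.mul_sum _ _ _).symm
      _ = ε * μ (⋃ t ∈ R, Q t) := by
          rw [measure_biUnion_finset hdisjR (fun t ht => hQm t (hG (hRG ht)))]
      _ ≤ ε * μ (Egen Q G (m+1) ∩ Q T) := mul_le_mul_right (measure_mono hUsub) _
      _ ≤ ε * (ε^m * μ (Q T)) := mul_le_mul_right ih _
      _ = ε^(m+1) * μ (Q T) := by ring

end Decay

section BasicMax

variable {n : ℕ}

lemma avg_le_maximal (f : (Fin n → ℝ) → ℝ≥0∞) {c : Fin n → ℝ} {r : ℝ} {x : Fin n → ℝ}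
    (hr : 0 < r) (hx : x ∈ closedBall c r) :
    (volume (closedBall c r))⁻¹ * ∫⁻ y in closedBall c r, f y ≤ maximal f x := by
  unfold maximal
  exact le_iSup_of_le c (le_iSup_of_le r (le_iSup_of_le hr (le_iSup_of_le hx le_rfl)))

lemma volB_pos {c : Fin n → ℝ} {r : ℝ} (hr : 0 < r) : volume (closedBall c r) ≠ 0 :=
  ((measure_ball_pos volume c hr).trans_le (measure_mono ball_subset_closedBall)).ne'

lemma volB_ne_top {c : Fin n → ℝ} {r : ℝ} : volume (closedBall c r) ≠ ∞ :=
  measure_closedBall_lt_top.ne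

lemma vol3 (c c' : Fin n → ℝ) {ρ : ℝ} (hρ : 0 < ρ) :
    volume (closedBall c (3*ρ)) = ENNReal.ofReal (3^n) * volume (closedBall c' ρ) := by
  have hd : Module.finrank ℝ (Fin n → ℝ) = n := by
    rw [Module.finrank_fintype_fun_eq_card, Fintype.card_fin]
  rw [Measure.addHaar_closedBall volume c (by positivity : (0:ℝ) ≤ 3*ρ),
    Measure.addHaar_closedBall volume c' hρ.le, hd, mul_pow,
    ENNReal.ofReal_mul (by positivity), mul_assoc]





lemma holder_bound {X : Type*} [MeasurableSpace X] (μ : Measure X) {w : X → ℝ≥0∞}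
    (hw : Measurable w) {r : ℝ} (hr : 1 < r) {A Qs : Set X}
    (hA : MeasurableSet A) (hAQ : A ⊆ Qs) (hQ0 : μ Qs ≠ 0) (hQt : μ Qs ≠ ∞)
    {c : ℝ≥0∞} (hvol : μ A ≤ c * μ Qs) :
    ∫⁻ x in A, w x ∂μ ≤ c ^ (1 / Real.conjExponent r) *
      ((((μ Qs)⁻¹ * ∫⁻ y in Qs, w y ^ r ∂μ) ^ (1/r)) * μ Qs) := by
  have hconj := Real.HolderConjugate.conjExponent hr
  set q := Real.conjExponent r with hq
  have hq0 : 0 < q := hconj.symm.pos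
  set χ : X → ℝ≥0∞ := A.indicator 1 with hχ
  have h1 : ∫⁻ x in A, w x ∂μ = ∫⁻ x in Qs, (w * χ) x ∂μ := by
    have hwi : w * χ = A.indicator w := by
      funext y; by_cases hy : y ∈ A <;> simp [hχ, hy]
    rw [hwi, lintegral_indicator hA, Measure.restrict_restrict hA,
      Set.inter_eq_self_of_subset_left hAQ]
  have h2 := ENNReal.lintegral_mul_le_Lp_mul_Lq (μ.restrict Qs) hconj
    hw.aemeasurable ((measurable_one.indicator hA).aemeasurable : AEMeasurable χ (μ.restrict Qs))
  have h3 : (∫⁻ x in Qs, (χ x) ^ q ∂μ) = μ A := by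
    have hpt : ∀ x, (χ x) ^ q = χ x := by
      intro x; by_cases hx : x ∈ A <;>
        simp [hχ, hx, ENNReal.zero_rpow_of_pos hq0]
    calc (∫⁻ x in Qs, (χ x) ^ q ∂μ) = ∫⁻ x in Qs, χ x ∂μ := by
          exact lintegral_congr fun x => hpt x
      _ = ∫⁻ x in A, (1:ℝ≥0∞) ∂(μ.restrict Qs) := lintegral_indicator hA _
      _ = (μ.restrict Qs) A := setLIntegral_one A
      _ = μ (A ∩ Qs) := Measure.restrict_apply hA
      _ = μ A := by rw [Set.inter_eq_self_of_subset_left hAQ]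
  have key : ∫⁻ x in A, w x ∂μ ≤ (∫⁻ y in Qs, w y ^ r ∂μ) ^ (1/r) * (μ A) ^ (1/q) := by
    rw [h1]
    exact h2.trans (by rw [h3])
  have hμA : (μ A) ^ (1/q) ≤ c ^ (1/q) * (μ Qs) ^ (1/q) := by
    calc (μ A) ^ (1/q) ≤ (c * μ Qs) ^ (1/q) :=
          ENNReal.rpow_le_rpow hvol (by positivity)
      _ = c ^ (1/q) * (μ Qs) ^ (1/q) := ENNReal.mul_rpow_of_nonneg _ _ (by positivity)
  have hIr : (∫⁻ y in Qs, w y ^ r ∂μ) ^ (1/r) =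
      (μ Qs) ^ (1/r) * (((μ Qs)⁻¹ * ∫⁻ y in Qs, w y ^ r ∂μ) ^ (1/r)) := by
    rw [← ENNReal.mul_rpow_of_nonneg _ _ (by positivity : (0:ℝ) ≤ 1/r),
      ← mul_assoc, ENNReal.mul_inv_cancel hQ0 hQt, one_mul]
  calc ∫⁻ x in A, w x ∂μ
      ≤ (∫⁻ y in Qs, w y ^ r ∂μ) ^ (1/r) * (μ A) ^ (1/q) := key
    _ ≤ (∫⁻ y in Qs, w y ^ r ∂μ) ^ (1/r) * (c ^ (1/q) * (μ Qs) ^ (1/q)) :=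
        mul_le_mul_right hμA _
    _ = c ^ (1/q) * ((((μ Qs)⁻¹ * ∫⁻ y in Qs, w y ^ r ∂μ) ^ (1/r)) *
          ((μ Qs) ^ (1/r) * (μ Qs) ^ (1/q))) := by rw [hIr]; ring
    _ = c ^ (1/q) * ((((μ Qs)⁻¹ * ∫⁻ y in Qs, w y ^ r ∂μ) ^ (1/r)) * μ Qs) := by
        rw [← ENNReal.rpow_add _ _ hQ0 hQt,
          show 1/r + 1/q = 1 by rw [one_div, one_div]; exact hconj.inv_add_inv_eq_one,
          ENNReal.rpow_one]



end BasicMax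

section Comp

variable {n : ℕ}

lemma maximalInd_le_comp {g : (Fin n → ℝ) → ℝ≥0∞}
    (G : Finset ℕ) {Q : ℕ → Set (Fin n → ℝ)} {cc : ℕ → Fin n → ℝ} {rr : ℕ → ℝ}
    (hball : ∀ j ∈ G, 0 < rr j ∧ Q j = closedBall (cc j) (rr j))
    (hdisj : (↑G : Set ℕ).PairwiseDisjoint Q)
    {γ : ℝ≥0∞} (hγ0 : γ ≠ 0) (hγt : γ ≠ ∞)
    (havg : ∀ j ∈ G, γ ≤ (volume (Q j))⁻¹ * ∫⁻ y in Q j, g y) (x : Fin n → ℝ) :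
    maximalInd (⋃ j ∈ G, Q j) x ≤
      ENNReal.ofReal (3^n) * γ⁻¹ * maximal g x := by
  set D := ENNReal.ofReal (3^n : ℝ) with hD
  have hD0 : D ≠ 0 := by
    simp only [hD, ne_eq, ENNReal.ofReal_eq_zero, not_le]; positivity
  have hDt : D ≠ ∞ := ENNReal.ofReal_ne_top
  set U := ⋃ j ∈ G, Q j with hU
  have hUm : MeasurableSet U := by
    apply Finset.measurableSet_biUnion
    intro j hj
    rw [(hball j hj).2]
    exact measurableSet_closedBall
  rw [maximalInd, maximal]
  refine iSup_le fun c₀ => iSup_le fun r₀ => iSup_le fun hr₀ => iSup_le fun hx₀ => ?_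
  set B := closedBall c₀ r₀ with hB
  set B3 := closedBall c₀ (3*r₀) with hB3
  have hxB3 : x ∈ B3 := closedBall_subset_closedBall (by linarith) hx₀
  have hr₀3 : 0 < 3*r₀ := by linarith
  have hMB3 : (volume B3)⁻¹ * ∫⁻ y in B3, g y ≤ maximal g x := avg_le_maximal g hr₀3 hxB3
  have hvol3 : volume B3 = D * volume B := vol3 c₀ c₀ hr₀
  by_cases hcase : ∃ j ∈ G, ¬ Disjoint (Q j) B ∧ r₀ < rr j
  · -- a big cube meets B
    obtain ⟨j, hjG, hnd, hrj⟩ := hcase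
    obtain ⟨hrpos, hQj⟩ := hball j hjG
    obtain ⟨z, hzQ, hzB⟩ := Set.not_disjoint_iff.1 hnd
    have hzQ' : z ∈ closedBall (cc j) (rr j) := hQj ▸ hzQ
    have hγle : γ ≤ D * maximal g x := by
      have hmono : (∫⁻ y in Q j, g y) ≤ ∫⁻ y in closedBall (cc j) (3*rr j), g y := by
        apply lintegral_mono_set
        rw [hQj]
        exact closedBall_subset_closedBall (by linarith)
      have hv3 : volume (closedBall (cc j) (3*rr j)) = D * volume (Q j) := by
        rw [hQj]; exact vol3 _ _ hrpos
      have hxj : x ∈ closedBall (cc j) (3*rr j) := by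
        have h1 : dist x z ≤ 2*r₀ := by
          have hx1 := mem_closedBall.1 hx₀
          have hz1 := mem_closedBall.1 hzB
          calc dist x z ≤ dist x c₀ + dist c₀ z := dist_triangle _ _ _
            _ ≤ r₀ + r₀ := add_le_add hx1 (by rwa [dist_comm])
            _ = 2*r₀ := by ring
        have h2 : dist z (cc j) ≤ rr j := mem_closedBall.1 hzQ'
        exact mem_closedBall.2 ((dist_triangle x z (cc j)).trans (by linarith))
      have hQ0 : volume (Q j) ≠ 0 := by rw [hQj]; exact volB_pos hrpos
      have hQt : volume (Q j) ≠ ∞ := by rw [hQj]; exact volB_ne_top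
      calc γ ≤ (volume (Q j))⁻¹ * ∫⁻ y in Q j, g y := havg j hjG
        _ ≤ (volume (Q j))⁻¹ * ∫⁻ y in closedBall (cc j) (3*rr j), g y :=
            mul_le_mul_right hmono _
        _ = D * ((volume (closedBall (cc j) (3*rr j)))⁻¹ *
              ∫⁻ y in closedBall (cc j) (3*rr j), g y) := by
            rw [hv3, ENNReal.mul_inv (Or.inl hD0) (Or.inl hDt), ← mul_assoc, ← mul_assoc,
              ENNReal.mul_inv_cancel hD0 hDt, one_mul]
        _ ≤ D * maximal g x := mul_le_mul_right (avg_le_maximal g (by linarith) hxj) _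
    have hLHS1 : (volume B)⁻¹ * ∫⁻ y in B, U.indicator 1 y ≤ 1 := by
      have hle : (∫⁻ y in B, U.indicator 1 y) ≤ ∫⁻ y in B, (1:ℝ≥0∞) :=
        lintegral_mono fun y => by by_cases hy : y ∈ U <;> simp [hy]
      calc (volume B)⁻¹ * ∫⁻ y in B, U.indicator 1 y
          ≤ (volume B)⁻¹ * volume B := by
            rw [setLIntegral_one] at hle; exact mul_le_mul_right hle _
        _ = 1 := ENNReal.inv_mul_cancel (volB_pos hr₀) volB_ne_top
    refine hLHS1.trans ?_
    have h2 := mul_le_mul_right hγle γ⁻¹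
    rw [ENNReal.inv_mul_cancel hγ0 hγt] at h2
    calc (1:ℝ≥0∞) ≤ γ⁻¹ * (D * maximal g x) := h2
      _ = D * γ⁻¹ * maximal g x := by ring
  · -- all cubes meeting B are small
    push_neg at hcase
    have hsub3 : ∀ j ∈ G, ¬ Disjoint (Q j) B → Q j ⊆ B3 := by
      intro j hjG hnd y hy
      obtain ⟨hrpos, hQj⟩ := hball j hjG
      obtain ⟨z, hzQ, hzB⟩ := Set.not_disjoint_iff.1 hnd
      have hrle := hcase j hjG hnd
      have hy' : y ∈ closedBall (cc j) (rr j) := hQj ▸ hy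
      have hz' : z ∈ closedBall (cc j) (rr j) := hQj ▸ hzQ
      have h1 : dist y z ≤ 2 * rr j :=
        calc dist y z ≤ dist y (cc j) + dist (cc j) z := dist_triangle _ _ _
          _ ≤ rr j + rr j := add_le_add (mem_closedBall.1 hy') (by
              rw [dist_comm]; exact mem_closedBall.1 hz')
          _ = 2 * rr j := by ring
      have h2 : dist z c₀ ≤ r₀ := mem_closedBall.1 hzB
      exact mem_closedBall.2 ((dist_triangle y z c₀).trans (by linarith))
    set S := G.filter (fun j => ¬ Disjoint (Q j) B) with hS
    have hSG : S ⊆ G := Finset.filter_subset _ _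
    have hQm : ∀ j ∈ S, MeasurableSet (Q j) := by
      intro j hj
      rw [(hball j (hSG hj)).2]; exact measurableSet_closedBall
    have hind : (∫⁻ y in B, U.indicator 1 y) = volume (U ∩ B) := by
      rw [lintegral_indicator hUm]
      simp only [Pi.one_apply]
      rw [setLIntegral_one, Measure.restrict_apply hUm]
    have hUB : U ∩ B ⊆ ⋃ j ∈ S, Q j := by
      rintro y ⟨hyU, hyB⟩
      obtain ⟨j, hjG, hyj⟩ := Set.mem_iUnion₂.1 hyU
      refine Set.mem_biUnion (Finset.mem_filter.2 ⟨hjG, Set.not_disjoint_iff.2 ⟨y, hyj, hyB⟩⟩) hyj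
    have hvolQ : ∀ j ∈ S, volume (Q j) ≤ γ⁻¹ * ∫⁻ y in Q j, g y := by
      intro j hj
      obtain ⟨hrpos, hQj⟩ := hball j (hSG hj)
      have hQ0 : volume (Q j) ≠ 0 := by rw [hQj]; exact volB_pos hrpos
      have hQt : volume (Q j) ≠ ∞ := by rw [hQj]; exact volB_ne_top
      have h2 : γ * volume (Q j) ≤ ∫⁻ y in Q j, g y := by
        calc γ * volume (Q j) ≤ ((volume (Q j))⁻¹ * ∫⁻ y in Q j, g y) * volume (Q j) :=
              mul_le_mul_left (havg j (hSG hj)) _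
          _ = ∫⁻ y in Q j, g y := by
              rw [mul_comm ((volume (Q j))⁻¹) _, mul_assoc,
                ENNReal.inv_mul_cancel hQ0 hQt, mul_one]
      calc volume (Q j) = γ⁻¹ * (γ * volume (Q j)) := by
            rw [← mul_assoc, ENNReal.inv_mul_cancel hγ0 hγt, one_mul]
        _ ≤ γ⁻¹ * ∫⁻ y in Q j, g y := mul_le_mul_right h2 _
    have hsum : (∑ j ∈ S, ∫⁻ y in Q j, g y) ≤ ∫⁻ y in B3, g y := by
      rw [← lintegral_biUnion_finset (hdisj.subset (by exact_mod_cast hSG)) hQm]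
      exact lintegral_mono_set (Set.iUnion₂_subset fun j hj =>
        hsub3 j (hSG hj) (Finset.mem_filter.1 hj).2)
    have hchain : volume (U ∩ B) ≤ γ⁻¹ * ∫⁻ y in B3, g y := by
      calc volume (U ∩ B) ≤ volume (⋃ j ∈ S, Q j) := measure_mono hUB
        _ ≤ ∑ j ∈ S, volume (Q j) := measure_biUnion_finset_le _ _
        _ ≤ ∑ j ∈ S, γ⁻¹ * ∫⁻ y in Q j, g y := Finset.sum_le_sum hvolQ
        _ = γ⁻¹ * ∑ j ∈ S, ∫⁻ y in Q j, g y := (Finset.mul_sum _ _ _).symm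
        _ ≤ γ⁻¹ * ∫⁻ y in B3, g y := mul_le_mul_right hsum _
    have hB3int : (∫⁻ y in B3, g y) ≤ D * volume B * maximal g x := by
      calc (∫⁻ y in B3, g y) = volume B3 * ((volume B3)⁻¹ * ∫⁻ y in B3, g y) := by
            rw [← mul_assoc, ENNReal.mul_inv_cancel (volB_pos hr₀3) volB_ne_top, one_mul]
        _ ≤ volume B3 * maximal g x := mul_le_mul_right hMB3 _
        _ = D * volume B * maximal g x := by rw [hvol3]
    calc (volume B)⁻¹ * ∫⁻ y in B, U.indicator 1 y
        = (volume B)⁻¹ * volume (U ∩ B) := by rw [hind]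
      _ ≤ (volume B)⁻¹ * (γ⁻¹ * (D * volume B * maximal g x)) :=
          mul_le_mul_right (hchain.trans (mul_le_mul_right hB3int _)) _
      _ = (volume B * (volume B)⁻¹) * (D * γ⁻¹ * maximal g x) := by ring
      _ = D * γ⁻¹ * maximal g x := by
          rw [ENNReal.mul_inv_cancel (volB_pos hr₀) volB_ne_top, one_mul]

end Comp


section Key
open scoped Classical
variable {n : ℕ}

lemma key_estimate
    {w : (Fin n → ℝ) → ℝ≥0∞} (hw : Measurable w)
    {p r η : ℝ} (hp : 0 < p) (hr : 1 < r)
    {C₀ : ℝ≥0∞} (hSC : SCp w p r C₀)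
    {J : Set ℕ} {Q : ℕ → Set (Fin n → ℝ)}
    {cc : ℕ → Fin n → ℝ} {rr : ℕ → ℝ}
    (hcube' : ∀ j ∈ J, 0 < rr j ∧ Q j = closedBall (cc j) (rr j))
    (hinj : J.InjOn Q)
    (hnest : ∀ i ∈ J, ∀ j ∈ J, Q i ⊆ Q j ∨ Q j ⊆ Q i ∨ Disjoint (Q i) (Q j))
    (hsparse : ∀ j ∈ J,
      volume (⋃ i ∈ {i ∈ J | Q i ⊂ Q j}, Q i) ≤ ENNReal.ofReal (1 - η) * volume (Q j))
    (g : (Fin n → ℝ) → ℝ≥0∞)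
    {G : Finset ℕ} (hG : ↑G ⊆ J)
    {γ : ℝ≥0∞} (hγ0 : γ ≠ 0) (hγt : γ ≠ ∞)
    (havG : ∀ j ∈ G, γ ≤ (volume (Q j))⁻¹ * ∫⁻ y in Q j, g y)
    (m : ℕ) :
    (volume.withDensity w) (Egen Q G (m+1)) ≤
      ((ENNReal.ofReal (1-η)) ^ ((1:ℝ)/Real.conjExponent r)) ^ m *
        (C₀ * (ENNReal.ofReal ((3:ℝ)^n) * γ⁻¹) ^ p * ∫⁻ x, (maximal g x)^p * w x) := by
  have hne : ∀ j ∈ J, (Q j).Nonempty := fun j hj => by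
    rw [(hcube' j hj).2]; exact nonempty_closedBall.2 (hcube' j hj).1.le
  have hQmeas : ∀ j ∈ J, MeasurableSet (Q j) := fun j hj => by
    rw [(hcube' j hj).2]; exact measurableSet_closedBall
  set D := ENNReal.ofReal ((3:ℝ)^n) with hD
  have hD0 : D ≠ 0 := by
    rw [hD]; simp only [ne_eq, ENNReal.ofReal_eq_zero, not_le]; positivity
  have hDt : D ≠ ∞ := ENNReal.ofReal_ne_top
  set ε := ENNReal.ofReal (1-η) with hε
  set q := Real.conjExponent r with hq
  have hconj : r.HolderConjugate q := Real.HolderConjugate.conjExponent hr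
  set δ := ε ^ ((1:ℝ)/q) with hδ
  set ν := volume.withDensity w with hν
  set Itot := ∫⁻ x, (maximal g x)^p * w x with hItot
  set R1 := G.filter (fun t => rnk Q G t = 1) with hR1
  have hR1G : R1 ⊆ G := Finset.filter_subset _ _
  have hR1J : ↑R1 ⊆ J := fun j hj => hG (hR1G hj)
  have hQmG : ∀ j ∈ G, MeasurableSet (Q j) := fun j hj => hQmeas j (hG hj)
  have hEm : MeasurableSet (Egen Q G (m+1)) :=
    Finset.measurableSet_biUnion _ (fun j hj => hQmG j (Finset.filter_subset _ _ hj))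
  -- cover by rank-one cubes
  have hcover : Egen Q G (m+1) ⊆ ⋃ T ∈ R1, (Egen Q G (m+1) ∩ Q T) := by
    intro x hx
    obtain ⟨j, hjG, hrj, hxj⟩ := mem_Egen.1 hx
    obtain ⟨T, hTG, hrT, hjT⟩ := rnk_exists_between (m := 1) hinj hnest hne hG hjG
      le_rfl (le_trans (by omega) hrj)
    exact Set.mem_biUnion (Finset.mem_filter.2 ⟨hTG, hrT⟩) ⟨hx, hjT hxj⟩
  have hdisjR1 : (↑R1 : Set ℕ).PairwiseDisjoint Q := by
    intro i hi j hj hij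
    exact rnk_eq_disjoint hinj hnest hG (hR1G hi) (hR1G hj) hij
      (by rw [(Finset.mem_filter.1 hi).2, (Finset.mem_filter.1 hj).2])
  -- the weighted bound on each piece, via decay + Hölder
  have hδm : ∀ T : ℕ, ((ε ^ m : ℝ≥0∞)) ^ ((1:ℝ)/q) = δ ^ m := fun _ => by
    rw [← ENNReal.rpow_natCast ε m, ← ENNReal.rpow_mul, mul_comm,
      ENNReal.rpow_mul, ENNReal.rpow_natCast]
  have hWT : ∀ T ∈ R1, ν (Egen Q G (m+1) ∩ Q T) ≤
      δ^m * (((volume (Q T))⁻¹ * ∫⁻ y in Q T, (w y)^r) ^ (1/r) * volume (Q T)) := by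
    intro T hT
    have hTJ : T ∈ J := hR1J hT
    have hQT0 : volume (Q T) ≠ 0 := by
      rw [(hcube' T hTJ).2]; exact volB_pos (hcube' T hTJ).1
    have hQTt : volume (Q T) ≠ ∞ := by rw [(hcube' T hTJ).2]; exact volB_ne_top
    have hAm : MeasurableSet (Egen Q G (m+1) ∩ Q T) := hEm.inter (hQmeas T hTJ)
    have hdecay := Egen_decay volume hinj hnest hne hQmeas hsparse hG (hR1G hT)
      (Finset.mem_filter.1 hT).2 m
    have hold := holder_bound volume hw hr hAm
      (Set.inter_subset_right) hQT0 hQTt hdecay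
    have hνA : ν (Egen Q G (m+1) ∩ Q T) = ∫⁻ x in Egen Q G (m+1) ∩ Q T, w x :=
      withDensity_apply w hAm
    rw [hνA]
    calc ∫⁻ x in Egen Q G (m+1) ∩ Q T, w x
        ≤ (ε^m) ^ ((1:ℝ)/q) *
          ((((volume (Q T))⁻¹ * ∫⁻ y in Q T, (w y)^r) ^ (1/r)) * volume (Q T)) := by
          have := hold
          rw [one_div] at this ⊢
          exact this
      _ = δ^m * (((volume (Q T))⁻¹ * ∫⁻ y in Q T, (w y)^r) ^ (1/r) * volume (Q T)) := by
          rw [hδm T]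
  -- SCp bound on the sum
  set U := ⋃ T ∈ R1, Q T with hU
  have hUeq : (⋃ j ∈ (↑R1 : Set ℕ), closedBall (cc j) (rr j)) = U := by
    rw [Finset.set_biUnion_coe]
    exact Set.iUnion₂_congr fun j hj => ((hcube' j (hR1J hj)).2).symm
  have hdisjballs : (↑R1 : Set ℕ).PairwiseDisjoint
      (fun j => closedBall (cc j) (rr j)) := by
    intro i hi j hj hij
    have h1 := hdisjR1 hi hj hij
    have e1 : Q i = closedBall (cc i) (rr i) := (hcube' i (hR1J hi)).2
    have e2 : Q j = closedBall (cc j) (rr j) := (hcube' j (hR1J hj)).2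
    simpa [Function.onFun, e1, e2] using h1
  have hSCsum : ∑ T ∈ R1, ((volume (Q T))⁻¹ * ∫⁻ y in Q T, (w y)^r)^(1/r) * volume (Q T)
      ≤ C₀ * ∫⁻ x, (maximalInd U x)^p * w x := by
    have hsc := hSC (↑R1 : Set ℕ) cc rr (fun j hj => (hcube' j (hR1J hj)).1) hdisjballs
    rw [hUeq] at hsc
    rw [← Finset.tsum_subtype' R1 (fun T =>
      ((volume (Q T))⁻¹ * ∫⁻ y in Q T, (w y)^r)^(1/r) * volume (Q T))]
    refine le_trans (le_of_eq ?_) hsc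
    apply tsum_congr
    rintro ⟨j, hj⟩
    have hjR1 : j ∈ R1 := by exact_mod_cast hj
    rw [(hcube' j (hR1J hjR1)).2]
  -- comparison with the maximal function
  have hcomp : (∫⁻ x, (maximalInd U x)^p * w x) ≤ (D * γ⁻¹)^p * Itot := by
    have hballR1 : ∀ j ∈ R1, 0 < rr j ∧ Q j = closedBall (cc j) (rr j) :=
      fun j hj => hcube' j (hR1J hj)
    have hpt : ∀ x, (maximalInd U x)^p ≤ (D * γ⁻¹)^p * (maximal g x)^p := by
      intro x
      have h1 := maximalInd_le_comp R1 hballR1 hdisjR1 hγ0 hγt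
        (fun j hj => havG j (hR1G hj)) x
      calc (maximalInd U x)^p ≤ (D * γ⁻¹ * maximal g x)^p :=
            ENNReal.rpow_le_rpow (by rw [hU]; exact h1) hp.le
        _ = (D * γ⁻¹)^p * (maximal g x)^p := ENNReal.mul_rpow_of_nonneg _ _ hp.le
    have hfin : (D * γ⁻¹)^p ≠ ∞ :=
      ENNReal.rpow_ne_top_of_nonneg hp.le
        (ENNReal.mul_ne_top hDt (ENNReal.inv_ne_top.2 hγ0))
    calc (∫⁻ x, (maximalInd U x)^p * w x)
        ≤ ∫⁻ x, (D * γ⁻¹)^p * ((maximal g x)^p * w x) := by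
          refine lintegral_mono fun x => ?_
          show (maximalInd U x)^p * w x ≤ (D * γ⁻¹)^p * ((maximal g x)^p * w x)
          rw [← mul_assoc]
          exact mul_le_mul_left (hpt x) _
      _ = (D * γ⁻¹)^p * Itot := lintegral_const_mul' _ _ hfin
  -- put everything together
  calc ν (Egen Q G (m+1))
      ≤ ∑ T ∈ R1, ν (Egen Q G (m+1) ∩ Q T) :=
        (measure_mono hcover).trans (measure_biUnion_finset_le _ _)
    _ ≤ ∑ T ∈ R1, δ^m * (((volume (Q T))⁻¹ * ∫⁻ y in Q T, (w y)^r)^(1/r) * volume (Q T)) :=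
        Finset.sum_le_sum hWT
    _ = δ^m * ∑ T ∈ R1, ((volume (Q T))⁻¹ * ∫⁻ y in Q T, (w y)^r)^(1/r) * volume (Q T) :=
        (Finset.mul_sum _ _ _).symm
    _ ≤ δ^m * (C₀ * ∫⁻ x, (maximalInd U x)^p * w x) := mul_le_mul_right hSCsum _
    _ ≤ δ^m * (C₀ * ((D * γ⁻¹)^p * Itot)) :=
        mul_le_mul_right (mul_le_mul_right hcomp _) _
    _ = δ^m * (C₀ * (D * γ⁻¹)^p * Itot) := by ring

end Key

section Core
open scoped Classical
variable {n : ℕ}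

lemma core_estimate
    {w : (Fin n → ℝ) → ℝ≥0∞} (hw : Measurable w)
    {p r η : ℝ} (hp : 0 < p) (hr : 1 < r)
    {C₀ : ℝ≥0∞} (hSC : SCp w p r C₀)
    {J : Set ℕ} {Q : ℕ → Set (Fin n → ℝ)}
    {cc : ℕ → Fin n → ℝ} {rr : ℕ → ℝ}
    (hcube' : ∀ j ∈ J, 0 < rr j ∧ Q j = closedBall (cc j) (rr j))
    (hinj : J.InjOn Q)
    (hnest : ∀ i ∈ J, ∀ j ∈ J, Q i ⊆ Q j ∨ Q j ⊆ Q i ∨ Disjoint (Q i) (Q j))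
    (hsparse : ∀ j ∈ J,
      volume (⋃ i ∈ {i ∈ J | Q i ⊂ Q j}, Q i) ≤ ENNReal.ofReal (1 - η) * volume (Q j))
    (g : (Fin n → ℝ) → ℝ≥0∞) (b : ℕ)
    (hθ1 : ((ENNReal.ofReal (1-η)) ^ ((1:ℝ)/Real.conjExponent r)) ^ b * (4:ℝ≥0∞)^p < 1)
    {F : Finset ℕ} (hF : ↑F ⊆ J)
    {α' : ℝ≥0∞} (hα'0 : α' ≠ 0) (hα't : α' ≠ ∞) :
    (volume.withDensity w)
      {x | ((4*b : ℕ) : ℝ≥0∞) * α' <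
        ∑ j ∈ F, ((volume (Q j))⁻¹ * ∫⁻ y in Q j, g y) * (Q j).indicator 1 x} ≤
      (1 + (1 - ((ENNReal.ofReal (1-η)) ^ ((1:ℝ)/Real.conjExponent r)) ^ b * (4:ℝ≥0∞)^p)⁻¹)
        * C₀ * (ENNReal.ofReal ((3:ℝ)^n))^p * (α'⁻¹)^p
        * ∫⁻ x, (maximal g x)^p * w x := by
  set D := ENNReal.ofReal ((3:ℝ)^n) with hD
  have hD0 : D ≠ 0 := by
    rw [hD]; simp only [ne_eq, ENNReal.ofReal_eq_zero, not_le]; positivity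
  have hDt : D ≠ ∞ := ENNReal.ofReal_ne_top
  set ε := ENNReal.ofReal (1-η) with hε
  set q := Real.conjExponent r with hq
  set δ := ε ^ ((1:ℝ)/q) with hδ
  set fp := (4:ℝ≥0∞)^p with hfp
  set θ := δ^b * fp with hθ
  set ν := volume.withDensity w with hν
  set av := fun j => (volume (Q j))⁻¹ * ∫⁻ y in Q j, g y with hav
  set Itot := ∫⁻ x, (maximal g x)^p * w x with hItot
  set qi := (4:ℝ≥0∞)⁻¹ with hqi
  have h4_0 : (4:ℝ≥0∞) ≠ 0 := by norm_num
  have h4_t : (4:ℝ≥0∞) ≠ ∞ := by norm_num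
  have hqi0 : qi ≠ 0 := ENNReal.inv_ne_zero.2 h4_t
  have hqit : qi ≠ ∞ := ENNReal.inv_ne_top.2 h4_0
  set Fbig := F.filter (fun j => α' < av j) with hFbig
  set Fk : ℕ → Finset ℕ := fun k =>
    F.filter (fun j => qi^(k+1) * α' < av j ∧ av j ≤ qi^k * α') with hFkdef
  have hFbigJ : ↑Fbig ⊆ J := fun j hj => hF (Finset.mem_coe.2 (Finset.filter_subset _ _ hj))
  have hFkJ : ∀ k, ↑(Fk k) ⊆ J := fun k j hj =>
    hF (Finset.mem_coe.2 (Finset.filter_subset _ _ hj))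
  have hγk0 : ∀ k : ℕ, qi^(k+1) * α' ≠ 0 :=
    fun k => mul_ne_zero (pow_ne_zero _ hqi0) hα'0
  have hγkt : ∀ k : ℕ, qi^(k+1) * α' ≠ ∞ :=
    fun k => ENNReal.mul_ne_top (ENNReal.pow_ne_top hqit) hα't
  -- the covering of the level set
  have hsum_bound : ∀ x, x ∉ Egen Q Fbig 1 → (∀ k:ℕ, x ∉ Egen Q (Fk k) (b*(k+1)+1)) →
      (∑ j ∈ F, av j * (Q j).indicator 1 x) ≤ ((4*b : ℕ) : ℝ≥0∞) * α' := by
    intro x hxb hxk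
    set Cx := F.filter (fun j => x ∈ Q j) with hCx
    have hsum1 : (∑ j ∈ F, av j * (Q j).indicator 1 x) = ∑ j ∈ Cx, av j := by
      rw [← Finset.sum_filter_add_sum_filter_not F (fun j => x ∈ Q j)
        (fun j => av j * (Q j).indicator 1 x)]
      have h2 : ∑ j ∈ F.filter (fun j => ¬ x ∈ Q j), av j * (Q j).indicator 1 x = 0 := by
        apply Finset.sum_eq_zero
        intro j hj
        rw [Set.indicator_of_notMem (Finset.mem_filter.1 hj).2, mul_zero]
      have h1 : ∑ j ∈ Cx, av j * (Q j).indicator 1 x = ∑ j ∈ Cx, av j := by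
        apply Finset.sum_congr rfl
        intro j hj
        rw [Set.indicator_of_mem (Finset.mem_filter.1 hj).2, Pi.one_apply, mul_one]
      rw [h2, add_zero, h1]
    have hcard : ∀ k : ℕ, ((Fk k).filter (fun j => x ∈ Q j)).card ≤ b*(k+1) := by
      intro k
      by_contra hc
      push_neg at hc
      have hnonempty : ((Fk k).filter (fun j => x ∈ Q j)).Nonempty :=
        Finset.card_pos.1 (by omega)
      obtain ⟨s, hs, hrs⟩ := card_le_rnk hinj hnest (hFkJ k) hnonempty
      exact hxk k (mem_Egen.2 ⟨s, Finset.filter_subset _ _ hs, by omega,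
        (Finset.mem_filter.1 hs).2⟩)
    have hsmall : ∀ j ∈ Cx, av j ≤ α' := by
      intro j hj
      by_contra hbig
      push_neg at hbig
      refine hxb (mem_Egen.2 ⟨j, ?_, ?_, (Finset.mem_filter.1 hj).2⟩)
      · exact Finset.mem_filter.2 ⟨Finset.filter_subset _ _ hj, hbig⟩
      · exact rnk_pos (Finset.mem_filter.2 ⟨Finset.filter_subset _ _ hj, hbig⟩)
    rcases (F.filter (fun j => av j ≠ 0 ∧ av j ≤ α')).eq_empty_or_nonempty with hP | hP
    · have hzero : ∀ j ∈ Cx, av j = 0 := by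
        intro j hj
        by_contra h0
        have hmem : j ∈ F.filter (fun j => av j ≠ 0 ∧ av j ≤ α') :=
          Finset.mem_filter.2 ⟨Finset.filter_subset _ _ hj, h0, hsmall j hj⟩
        rw [hP] at hmem
        exact absurd hmem (Finset.notMem_empty j)
      rw [hsum1, Finset.sum_eq_zero hzero]
      exact zero_le
    · obtain ⟨j0, hj0P, hj0min⟩ := Finset.exists_min_image _ av hP
      obtain ⟨hj0F, hj00, hj0le⟩ := Finset.mem_filter.1 hj0P
      have hμ0t : av j0 ≠ ∞ := fun h => hα't (top_le_iff.1 (h ▸ hj0le))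
      obtain ⟨K, hK⟩ := ENNReal.exists_nat_gt (ENNReal.div_lt_top hα't hj00).ne
      have hK4 : α' / av j0 < (4:ℝ≥0∞)^K := by
        refine hK.trans_le ?_
        calc ((K:ℕ):ℝ≥0∞) ≤ ((4^K : ℕ):ℝ≥0∞) :=
              Nat.cast_le.2 (le_of_lt (Nat.lt_pow_self (n := K) (a := 4) (by norm_num)))
          _ = (4:ℝ≥0∞)^K := by push_cast; ring
      have h40 : ((4:ℝ≥0∞)^K) ≠ 0 := pow_ne_zero _ h4_0
      have h4t : ((4:ℝ≥0∞)^K) ≠ ∞ := ENNReal.pow_ne_top h4_t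
      have hqik : qi^K = ((4:ℝ≥0∞)^K)⁻¹ := by rw [hqi, ENNReal.inv_pow]
      have hKα : qi^K * α' < av j0 := by
        have h4 : α' < (4:ℝ≥0∞)^K * av j0 :=
          (ENNReal.div_lt_iff (Or.inl hj00) (Or.inl hμ0t)).1 hK4
        calc qi^K * α' < qi^K * ((4:ℝ≥0∞)^K * av j0) := by
              exact ENNReal.mul_lt_mul_right (by rw [hqik]; exact ENNReal.inv_ne_zero.2 h4t)
                (by rw [hqik]; exact ENNReal.inv_ne_top.2 h40) h4
          _ = av j0 := by rw [hqik, ← mul_assoc, ENNReal.inv_mul_cancel h40 h4t, one_mul]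
      have hassign : ∀ j ∈ Cx, av j ≠ 0 → ∃ k, k < K ∧ j ∈ Fk k := by
        intro j hj h0
        have hjle : av j ≤ α' := hsmall j hj
        set kk := Nat.findGreatest (fun k => av j ≤ qi^k * α') K with hkk
        have hP0 : av j ≤ qi^0 * α' := by simpa using hjle
        have hPk : av j ≤ qi^kk * α' :=
          Nat.findGreatest_spec (P := fun k => av j ≤ qi^k * α') (Nat.zero_le K) hP0
        have hkkK : kk ≤ K := Nat.findGreatest_le K
        have hkkne : kk ≠ K := by
          intro hEq
          have hμ0le : av j0 ≤ av j := hj0min j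
            (Finset.mem_filter.2 ⟨Finset.filter_subset _ _ hj, h0, hjle⟩)
          rw [hEq] at hPk
          exact absurd (lt_of_le_of_lt (hμ0le.trans hPk) hKα) (lt_irrefl _)
        have hnot : ¬ (av j ≤ qi^(kk+1) * α') :=
          Nat.findGreatest_is_greatest (Nat.lt_succ_self kk) (by omega)
        exact ⟨kk, by omega, Finset.mem_filter.2
          ⟨Finset.filter_subset _ _ hj, not_le.1 hnot, hPk⟩⟩
      have hjbound : ∀ j ∈ Cx,
          av j ≤ ∑ k ∈ Finset.range K, (if j ∈ Fk k then qi^k * α' else 0) := by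
        intro j hj
        by_cases h0 : av j = 0
        · rw [h0]; exact zero_le
        · obtain ⟨k, hkK, hjk⟩ := hassign j hj h0
          have hle : av j ≤ (if j ∈ Fk k then qi^k * α' else 0) := by
            rw [if_pos hjk]
            exact (Finset.mem_filter.1 hjk).2.2
          exact hle.trans (Finset.single_le_sum
            (f := fun k => if j ∈ Fk k then qi^k * α' else 0)
            (fun i _ => zero_le) (Finset.mem_range.2 hkK))
      have hterm : ∀ k : ℕ, ((b*(k+1) : ℕ):ℝ≥0∞) * (qi^k * α') ≤
          ((b:ℝ≥0∞) * α') * (2 * 2⁻¹^k) := by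
        intro k
        have h2inv : (2:ℝ≥0∞) * 2⁻¹ = 1 := ENNReal.mul_inv_cancel (by norm_num) (by norm_num)
        have hqik2 : qi^k = 2⁻¹^k * 2⁻¹^k := by
          rw [hqi, show (4:ℝ≥0∞) = 2*2 by norm_num,
            ENNReal.mul_inv (by norm_num) (by norm_num), mul_pow]
        have hk2 : ((k+1 : ℕ):ℝ≥0∞) ≤ 2^(k+1) := by
          have := (Nat.lt_two_pow_self (n := k+1)).le
          calc ((k+1:ℕ):ℝ≥0∞) ≤ ((2^(k+1) : ℕ):ℝ≥0∞) := Nat.cast_le.2 this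
            _ = 2^(k+1) := by push_cast; ring
        have hkey : ((k+1 : ℕ):ℝ≥0∞) * qi^k ≤ 2 * 2⁻¹^k := by
          calc ((k+1 : ℕ):ℝ≥0∞) * qi^k ≤ 2^(k+1) * (2⁻¹^k * 2⁻¹^k) := by
                rw [← hqik2]; exact mul_le_mul_left hk2 _
            _ = 2 * ((2*2⁻¹)^k * 2⁻¹^k) := by rw [mul_pow]; ring
            _ = 2 * 2⁻¹^k := by rw [h2inv, one_pow, one_mul]
        calc ((b*(k+1) : ℕ):ℝ≥0∞) * (qi^k * α')
            = ((b:ℝ≥0∞) * α') * (((k+1:ℕ):ℝ≥0∞) * qi^k) := by push_cast; ring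
          _ ≤ ((b:ℝ≥0∞) * α') * (2 * 2⁻¹^k) := mul_le_mul_right hkey _
      calc (∑ j ∈ F, av j * (Q j).indicator 1 x) = ∑ j ∈ Cx, av j := hsum1
        _ ≤ ∑ j ∈ Cx, ∑ k ∈ Finset.range K, (if j ∈ Fk k then qi^k * α' else 0) :=
            Finset.sum_le_sum hjbound
        _ = ∑ k ∈ Finset.range K, ∑ j ∈ Cx, (if j ∈ Fk k then qi^k * α' else 0) :=
            Finset.sum_comm
        _ ≤ ∑ k ∈ Finset.range K, ((b*(k+1) : ℕ):ℝ≥0∞) * (qi^k * α') := by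
            refine Finset.sum_le_sum fun k _ => ?_
            rw [Finset.sum_ite_mem]
            rw [Finset.sum_const, nsmul_eq_mul]
            have hsub : Cx ∩ Fk k ⊆ (Fk k).filter (fun j => x ∈ Q j) := by
              intro j hj
              rw [Finset.mem_inter] at hj
              exact Finset.mem_filter.2 ⟨hj.2, (Finset.mem_filter.1 hj.1).2⟩
            refine mul_le_mul_left (Nat.cast_le.2 ((Finset.card_le_card hsub).trans
              (hcard k))) _
        _ ≤ ∑ k ∈ Finset.range K, ((b:ℝ≥0∞) * α') * (2 * 2⁻¹^k) :=
            Finset.sum_le_sum fun k _ => hterm k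
        _ = (2 * (b:ℝ≥0∞) * α') * ∑ k ∈ Finset.range K, 2⁻¹^k := by
            rw [Finset.mul_sum]
            exact Finset.sum_congr rfl fun k _ => by ring
        _ ≤ (2 * (b:ℝ≥0∞) * α') * 2 := by
            refine mul_le_mul_right ?_ _
            calc (∑ k ∈ Finset.range K, (2⁻¹:ℝ≥0∞)^k) ≤ ∑' k : ℕ, (2⁻¹:ℝ≥0∞)^k :=
                  ENNReal.sum_le_tsum _
              _ = (1 - 2⁻¹)⁻¹ := ENNReal.tsum_geometric _
              _ = 2 := by rw [ENNReal.one_sub_inv_two, inv_inv]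
        _ = ((4*b : ℕ) : ℝ≥0∞) * α' := by push_cast; ring
  have hcov : {x | ((4*b:ℕ):ℝ≥0∞) * α' < ∑ j ∈ F, av j * (Q j).indicator 1 x} ⊆
      Egen Q Fbig 1 ∪ ⋃ k : ℕ, Egen Q (Fk k) (b*(k+1)+1) := by
    intro x hx
    by_contra hxn
    rw [Set.mem_union, not_or] at hxn
    obtain ⟨hxb, hxk⟩ := hxn
    rw [Set.mem_iUnion] at hxk
    push_neg at hxk
    exact absurd (hsum_bound x hxb hxk) (not_le.2 hx)
  -- apply key estimate to each piece
  set Kbase := C₀ * (D * α'⁻¹)^p * Itot with hKbase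
  have hbig : ν (Egen Q Fbig 1) ≤ Kbase := by
    have := key_estimate hw hp hr hSC hcube' hinj hnest hsparse g hFbigJ hα'0 hα't
      (fun j hj => (le_of_lt (Finset.mem_filter.1 hj).2)) 0
    simpa only [pow_zero, one_mul, zero_add] using this
  have hpowk : ∀ k : ℕ, ((4:ℝ≥0∞)^(k+1) : ℝ≥0∞)^(p:ℝ) = fp^(k+1) := by
    intro k
    rw [← ENNReal.rpow_natCast (4:ℝ≥0∞) (k+1), ← ENNReal.rpow_mul, mul_comm,
      ENNReal.rpow_mul, ENNReal.rpow_natCast]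
  have hterm' : ∀ k : ℕ, ν (Egen Q (Fk k) (b*(k+1)+1)) ≤ θ^(k+1) * Kbase := by
    intro k
    have hkey := key_estimate hw hp hr hSC hcube' hinj hnest hsparse g (hFkJ k)
      (hγk0 k) (hγkt k)
      (fun j hj => (le_of_lt (Finset.mem_filter.1 hj).2.1)) (b*(k+1))
    refine hkey.trans (le_of_eq ?_)
    have hqinv : (qi^(k+1) * α')⁻¹ = (4:ℝ≥0∞)^(k+1) * α'⁻¹ := by
      rw [ENNReal.mul_inv (Or.inl (pow_ne_zero _ hqi0)) (Or.inl (ENNReal.pow_ne_top hqit)),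
        hqi, ENNReal.inv_pow, inv_inv]
    have hmulp : (D * (qi^(k+1) * α')⁻¹)^p = fp^(k+1) * (D * α'⁻¹)^p := by
      rw [hqinv, show D * ((4:ℝ≥0∞)^(k+1) * α'⁻¹) = (4:ℝ≥0∞)^(k+1) * (D * α'⁻¹) by ring,
        ENNReal.mul_rpow_of_nonneg _ _ hp.le, hpowk k]
    rw [hmulp, pow_mul, hθ, mul_pow]
    ring
  calc ν {x | ((4*b:ℕ):ℝ≥0∞) * α' < ∑ j ∈ F, av j * (Q j).indicator 1 x}
      ≤ ν (Egen Q Fbig 1 ∪ ⋃ k : ℕ, Egen Q (Fk k) (b*(k+1)+1)) := measure_mono hcov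
    _ ≤ ν (Egen Q Fbig 1) + ν (⋃ k : ℕ, Egen Q (Fk k) (b*(k+1)+1)) := measure_union_le _ _
    _ ≤ Kbase + ∑' k : ℕ, ν (Egen Q (Fk k) (b*(k+1)+1)) :=
        add_le_add hbig (measure_iUnion_le _)
    _ ≤ Kbase + ∑' k : ℕ, θ^(k+1) * Kbase :=
        add_le_add_right (ENNReal.tsum_le_tsum hterm') _
    _ ≤ Kbase + (1-θ)⁻¹ * Kbase := by
        refine add_le_add_right ?_ _
        rw [ENNReal.tsum_mul_right]
        refine mul_le_mul_left ?_ _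
        calc (∑' k : ℕ, θ^(k+1)) ≤ ∑' k : ℕ, θ^k :=
              ENNReal.tsum_le_tsum fun k => by
                rw [pow_succ]
                exact mul_le_of_le_one_right' hθ1.le
          _ = (1-θ)⁻¹ := ENNReal.tsum_geometric _
    _ = (1 + (1-θ)⁻¹) * Kbase := by ring
    _ = (1 + (1-θ)⁻¹) * C₀ * D^p * (α'⁻¹)^p * Itot := by
        rw [hKbase, ENNReal.mul_rpow_of_nonneg _ _ hp.le]
        ring

end Core

/-- Weak type sparse bound (Theorem 1.3): if `w ∈ SC_p`, then for every `η`-sparse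
family `𝒮` of (nested-or-disjoint) dyadic-like cubes,
`‖A_𝒮 f‖_{L^{p,∞}(w)} ≤ C ‖Mf‖_{L^p(w)}`, with `C` independent of `f`. -/
theorem stmt12 {n : ℕ} (w : (Fin n → ℝ) → ℝ≥0∞) (hw : Measurable w)
    (p r η : ℝ) (hp : 0 < p) (hr : 1 < r) (hη0 : 0 < η) (hη1 : η < 1)
    (C₀ : ℝ≥0∞) (hC₀ : C₀ < ∞) (hSC : SCp w p r C₀)
    (J : Set ℕ) (Q : ℕ → Set (Fin n → ℝ))
    (hcube : ∀ j ∈ J, ∃ (c : Fin n → ℝ) (ρ : ℝ), 0 < ρ ∧ Q j = closedBall c ρ)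
    (hinj : J.InjOn Q)
    (hnest : ∀ i ∈ J, ∀ j ∈ J, Q i ⊆ Q j ∨ Q j ⊆ Q i ∨ Disjoint (Q i) (Q j))
    (hsparse : ∀ j ∈ J,
      volume (⋃ i ∈ {i ∈ J | Q i ⊂ Q j}, Q i) ≤ ENNReal.ofReal (1 - η) * volume (Q j)) :
    ∃ C : ℝ≥0∞, C < ∞ ∧
      ∀ f : (Fin n → ℝ) → ℝ, LocallyIntegrable f volume →
        ∀ α : ℝ≥0∞, α * (∫⁻ x in {x | α < sparseOp J Q f x}, w x) ^ (1/p) ≤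
          C * (∫⁻ x, (maximal (fun y => (‖f y‖₊ : ℝ≥0∞)) x) ^ p * w x) ^ (1/p) := by
  classical
  choose! cc rr hcube' using hcube
  have hQmeas : ∀ j ∈ J, MeasurableSet (Q j) := fun j hj => by
    rw [(hcube' j hj).2]; exact measurableSet_closedBall
  set D := ENNReal.ofReal ((3:ℝ)^n) with hD
  have hDt : D ≠ ∞ := ENNReal.ofReal_ne_top
  set ε := ENNReal.ofReal (1-η) with hε
  have hε1 : ε < 1 := by rw [hε]; exact ENNReal.ofReal_lt_one.2 (by linarith)
  set q := Real.conjExponent r with hq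
  have hconj : r.HolderConjugate q := Real.HolderConjugate.conjExponent hr
  set δ := ε ^ ((1:ℝ)/q) with hδ
  have hδ1 : δ < 1 := ENNReal.rpow_lt_one hε1 hconj.symm.one_div_pos
  set fp := (4:ℝ≥0∞)^p with hfp
  have hfp0 : fp ≠ 0 := (ENNReal.rpow_pos (by norm_num) (by norm_num)).ne'
  have hfpt : fp ≠ ∞ := ENNReal.rpow_ne_top_of_nonneg hp.le (by norm_num)
  have h2fp0 : (2*fp) ≠ 0 := mul_ne_zero (by norm_num) hfp0
  have h2fpt : (2*fp) ≠ ∞ := ENNReal.mul_ne_top (by norm_num) hfpt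
  obtain ⟨b₀, hb₀⟩ : ∃ m : ℕ, δ ^ m < (2*fp)⁻¹ := by
    have h := ENNReal.tendsto_pow_atTop_nhds_zero_of_lt_one hδ1
    have hpos : (0:ℝ≥0∞) < (2*fp)⁻¹ := ENNReal.inv_pos.2 h2fpt
    exact (h.eventually_lt_const hpos).exists
  set b := b₀ + 1 with hb
  set θ := δ^b * fp with hθ
  have hθ1 : θ < 1 := by
    have h1 : δ^b ≤ δ^b₀ := by
      rw [hb, pow_succ]
      exact mul_le_of_le_one_right' hδ1.le
    calc θ ≤ δ^b₀ * fp := mul_le_mul_left h1 _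
      _ < (2*fp)⁻¹ * fp := by
          exact ENNReal.mul_lt_mul_left hfp0 hfpt hb₀
      _ ≤ 1 := by
          rw [ENNReal.mul_inv (Or.inr hfpt) (Or.inr hfp0), mul_assoc,
            ENNReal.inv_mul_cancel hfp0 hfpt, mul_one]
          exact ENNReal.inv_le_one.2 (by norm_num)
  set N := 4*b with hN
  have hN0 : ((N:ℕ):ℝ≥0∞) ≠ 0 := Nat.cast_ne_zero.2 (by omega)
  have hNt : ((N:ℕ):ℝ≥0∞) ≠ ∞ := ENNReal.natCast_ne_top _
  set KK := (1 + (1-θ)⁻¹) * C₀ * D^p * ((N:ℕ):ℝ≥0∞)^p with hKK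
  have hKKt : KK ≠ ∞ := by
    have h1 : (1-θ) ≠ 0 := fun h => absurd (tsub_eq_zero_iff_le.1 h) (not_le.2 hθ1)
    exact ENNReal.mul_ne_top (ENNReal.mul_ne_top (ENNReal.mul_ne_top
      (ENNReal.add_ne_top.2 ⟨ENNReal.one_ne_top, ENNReal.inv_ne_top.2 h1⟩) hC₀.ne)
      (ENNReal.rpow_ne_top_of_nonneg hp.le hDt)) (ENNReal.rpow_ne_top_of_nonneg hp.le hNt)
  refine ⟨KK ^ (1/p) + 1, ?_, ?_⟩
  · exact ENNReal.add_lt_top.2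
      ⟨ENNReal.rpow_lt_top_of_nonneg (by positivity) hKKt, ENNReal.one_lt_top⟩
  intro f hf α
  set g := fun y => ((‖f y‖₊ : ℝ≥0∞)) with hg
  set Itot := ∫⁻ x, (maximal g x)^p * w x with hItot
  rcases eq_or_ne α 0 with rfl | hα0
  · simp
  rcases eq_or_ne α ∞ with rfl | hαt
  · have hempty : {x | (⊤:ℝ≥0∞) < sparseOp J Q f x} = ∅ := by
      ext x
      simp only [Set.mem_setOf_eq, Set.mem_empty_iff_false, iff_false]
      exact not_top_lt
    rw [hempty, Measure.restrict_empty, lintegral_zero_measure,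
      ENNReal.zero_rpow_of_pos (by positivity : (0:ℝ) < 1/p), mul_zero]
    exact zero_le
  set ν := volume.withDensity w with hν
  set av := fun j => (volume (Q j))⁻¹ * ∫⁻ y in Q j, g y with hav
  have hSmeas : MeasurableSet {x | α < sparseOp J Q f x} := by
    have hmeas : Measurable (sparseOp J Q f) := by
      apply Measurable.ennreal_tsum
      intro j
      exact (measurable_one.indicator (hQmeas j j.2)).const_mul _
    exact measurableSet_lt measurable_const hmeas
  have hνS : ∫⁻ x in {x | α < sparseOp J Q f x}, w x = ν {x | α < sparseOp J Q f x} :=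
    (withDensity_apply w hSmeas).symm
  have hSun : {x | α < sparseOp J Q f x} =
      ⋃ s : Finset J, {x | α < ∑ j ∈ s, av ↑j * (Q (j:ℕ)).indicator 1 x} := by
    ext x
    simp only [Set.mem_setOf_eq, Set.mem_iUnion]
    rw [sparseOp, ENNReal.tsum_eq_iSup_sum, lt_iSup_iff]
  have hdir : Directed (· ⊆ ·)
      (fun s : Finset J => {x | α < ∑ j ∈ s, av ↑j * (Q (j:ℕ)).indicator 1 x}) := by
    intro s t
    refine ⟨s ∪ t, fun x hx => ?_, fun x hx => ?_⟩
    · have hx' : α < ∑ j ∈ s, av ↑j * (Q (j:ℕ)).indicator 1 x := hx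
      exact Set.mem_setOf_eq ▸
        hx'.trans_le (Finset.sum_le_sum_of_subset Finset.subset_union_left)
    · have hx' : α < ∑ j ∈ t, av ↑j * (Q (j:ℕ)).indicator 1 x := hx
      exact Set.mem_setOf_eq ▸
        hx'.trans_le (Finset.sum_le_sum_of_subset Finset.subset_union_right)
  have heach : ∀ s : Finset J,
      ν {x | α < ∑ j ∈ s, av ↑j * (Q (j:ℕ)).indicator 1 x} ≤ KK * (α⁻¹)^p * Itot := by
    intro s
    set F : Finset ℕ := s.image Subtype.val with hF
    have hFJ : ↑F ⊆ J := by
      intro j hj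
      simp only [hF, Finset.coe_image] at hj
      obtain ⟨a, _, rfl⟩ := hj
      exact a.2
    have hsumeq : ∀ x, (∑ j ∈ s, av ↑j * (Q (j:ℕ)).indicator 1 x) =
        ∑ j ∈ F, av j * (Q j).indicator 1 x := by
      intro x
      rw [hF, Finset.sum_image (fun a _ b _ h => Subtype.coe_injective h)]
    set α' := α / ((N:ℕ):ℝ≥0∞) with hα'
    have hα'0 : α' ≠ 0 := by
      rw [hα']
      intro h
      rcases ENNReal.div_eq_zero_iff.1 h with h | h
      exacts [hα0 h, hNt h]
    have hα't : α' ≠ ∞ := by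
      rw [hα']
      intro h
      rcases ENNReal.div_eq_top.1 h with ⟨_, h2⟩ | ⟨h1, _⟩
      exacts [hN0 h2, hαt h1]
    have hNα : ((N:ℕ):ℝ≥0∞) * α' = α := by
      rw [hα', ENNReal.mul_div_cancel hN0 hNt]
    have hcore := core_estimate hw hp hr hSC hcube' hinj hnest hsparse g b hθ1
      hFJ hα'0 hα't
    have hseteq : {x | α < ∑ j ∈ s, av ↑j * (Q (j:ℕ)).indicator 1 x} =
        {x | ((4*b:ℕ):ℝ≥0∞) * α' < ∑ j ∈ F, av j * (Q j).indicator 1 x} := by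
      ext x
      rw [Set.mem_setOf_eq, Set.mem_setOf_eq, hsumeq x]
      rw [show ((4*b:ℕ):ℝ≥0∞) * α' = α from hNα]
    rw [hseteq]
    refine hcore.trans ?_
    have hαinv : α'⁻¹ = ((N:ℕ):ℝ≥0∞) * α⁻¹ := by
      rw [hα', div_eq_mul_inv, ENNReal.mul_inv (Or.inl hα0) (Or.inl hαt), inv_inv, mul_comm]
    rw [hαinv, ENNReal.mul_rpow_of_nonneg _ _ hp.le, hKK]
    apply le_of_eq
    ring
  have hνSle : ν {x | α < sparseOp J Q f x} ≤ KK * (α⁻¹)^p * Itot := by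
    rw [hSun, Directed.measure_iUnion hdir]
    exact iSup_le heach
  rw [hνS]
  calc α * (ν {x | α < sparseOp J Q f x}) ^ (1/p)
      ≤ α * (KK * (α⁻¹)^p * Itot) ^ (1/p) :=
        mul_le_mul_right (ENNReal.rpow_le_rpow hνSle (by positivity)) _
    _ = α * (KK^(1/p) * α⁻¹ * Itot^(1/p)) := by
        rw [ENNReal.mul_rpow_of_nonneg _ _ (by positivity : (0:ℝ) ≤ 1/p),
          ENNReal.mul_rpow_of_nonneg _ _ (by positivity : (0:ℝ) ≤ 1/p),
          ← ENNReal.rpow_mul, mul_one_div_cancel hp.ne', ENNReal.rpow_one]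
    _ = (KK^(1/p) * Itot^(1/p)) * (α * α⁻¹) := by ring
    _ = KK^(1/p) * Itot^(1/p) := by rw [ENNReal.mul_inv_cancel hα0 hαt, mul_one]
    _ ≤ (KK^(1/p) + 1) * Itot^(1/p) := mul_le_mul_left le_self_add _
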